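/- (Discrete fractional Sobolev inequality.) Let 1 < α ≤ 2, let h_x, h_y > 0, and set R = [−π/h_x, π/h_x] × [−π/h_y, π/h_y]. Let F : ℝ² → ℂ be integrable on R and such that (k₁,k₂) ↦ (1 + |k₁|^α + |k₂|^α + 2|k₁ k₂|^α + |k₁|^{2α} + |k₂|^{2α}) |F(k₁,k₂)|² is integrable on R. Define the grid function V_{j,k} = (1/(2π)) ∫_R F(k₁,k₂) e^{i(k₁ j h_x + k₂ k h_y)} dk₁ dk₂ for j, k ∈ ℤ. Then for all j, k ∈ ℤ, |V_{j,k}| ≤ C_α · (∫_R (1 + |k₁|^α + |k₂|^α + 2|k₁ k₂|^α + |k₁|^{2α} + |k₂|^{2α}) |F(k₁,k₂)|² dk₁ dk₂)^{1/2}, where C_α = (1/(2π)) (∫_{ℝ²} dk₁ dk₂ / ((1+|k₁|^α)(1+|k₂|^α)))^{1/2} is finite and depends only on α, not on h_x or h_y. -/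

import Mathlib

open MeasureTheory

lemma aux_one_div_integrable (α : ℝ) (hα : 1 < α) :
    Integrable (fun x : ℝ => 1 / (1 + |x| ^ α)) := by
  have h0 : (0:ℝ) < α := by linarith
  have hcont : Continuous fun x : ℝ => (1 : ℝ) + |x| ^ α :=
    continuous_const.add (continuous_abs.rpow_const fun x => Or.inr h0.le)
  have hpos : ∀ x : ℝ, (0:ℝ) < 1 + |x| ^ α := fun x => by positivity
  have hbig : Integrable (fun x : ℝ => (2:ℝ) ^ α * (1 + ‖x‖) ^ (-α)) :=
    (integrable_one_add_norm (by simpa using hα)).const_mul _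
  refine hbig.mono' ((continuous_const.div hcont fun x => (hpos x).ne').aestronglyMeasurable) ?_
  refine Filter.Eventually.of_forall fun x => ?_
  have ht : (0:ℝ) ≤ |x| := abs_nonneg x
  have h1t : (0:ℝ) < 1 + |x| := by linarith
  have key : (1 + |x|) ^ α ≤ 2 ^ α * (1 + |x| ^ α) := by
    rcases le_total (|x|) 1 with h | h
    · calc (1 + |x|) ^ α ≤ (2:ℝ) ^ α := Real.rpow_le_rpow h1t.le (by linarith) h0.le
        _ ≤ 2 ^ α * (1 + |x| ^ α) := by
            nlinarith [Real.rpow_nonneg ht α, Real.rpow_nonneg (show (0:ℝ) ≤ 2 by norm_num) α]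
    · calc (1 + |x|) ^ α ≤ (2 * |x|) ^ α := Real.rpow_le_rpow h1t.le (by linarith) h0.le
        _ = 2 ^ α * |x| ^ α := Real.mul_rpow (by norm_num) ht
        _ ≤ 2 ^ α * (1 + |x| ^ α) := by
            nlinarith [Real.rpow_nonneg (show (0:ℝ) ≤ 2 by norm_num) α]
  have hrw : (1 + ‖x‖) ^ (-α) = 1 / (1 + |x|) ^ α := by
    rw [Real.norm_eq_abs, Real.rpow_neg h1t.le, one_div]
  have h2a : (0:ℝ) < (1 + |x|) ^ α := Real.rpow_pos_of_pos h1t α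
  rw [Real.norm_eq_abs, abs_of_pos (by positivity), hrw, mul_one_div,
    div_le_div_iff₀ (hpos x) h2a, one_mul]
  exact key

/-- Discrete fractional Sobolev inequality. With `R = [−π/h_x, π/h_x] × [−π/h_y, π/h_y]`,
`F` integrable on `R` together with its weighted square, and
`V_{j,k} = (1/(2π)) ∫_R F(k₁,k₂) e^{i(k₁ j h_x + k₂ k h_y)}`, one has
`|V_{j,k}| ≤ C_α (∫_R (1+|k₁|^α+|k₂|^α+2|k₁k₂|^α+|k₁|^{2α}+|k₂|^{2α}) |F|²)^{1/2}`,
where `C_α = (1/(2π)) (∫_{ℝ²} dk₁dk₂/((1+|k₁|^α)(1+|k₂|^α)))^{1/2}` is finite and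
depends only on `α`. -/
theorem discrete_fractional_sobolev_inequality
    (α hx hy : ℝ) (hα₁ : 1 < α) (hα₂ : α ≤ 2) (hhx : 0 < hx) (hhy : 0 < hy)
    (R : Set (ℝ × ℝ))
    (hR : R = Set.Icc (-(Real.pi / hx)) (Real.pi / hx) ×ˢ
              Set.Icc (-(Real.pi / hy)) (Real.pi / hy))
    (w : ℝ × ℝ → ℝ)
    (hw : w = fun p => 1 + |p.1| ^ α + |p.2| ^ α + 2 * |p.1 * p.2| ^ α
            + |p.1| ^ (2 * α) + |p.2| ^ (2 * α))
    (F : ℝ × ℝ → ℂ)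
    (hF : IntegrableOn F R)
    (hFw : IntegrableOn (fun p => w p * ‖F p‖ ^ 2) R)
    (V : ℤ → ℤ → ℂ)
    (hV : ∀ j k : ℤ, V j k = (1 / (2 * Real.pi) : ℂ) *
            ∫ p in R, F p * Complex.exp (Complex.I * (p.1 * j * hx + p.2 * k * hy)))
    (Cα : ℝ)
    (hC : Cα = (1 / (2 * Real.pi)) *
            Real.sqrt (∫ p : ℝ × ℝ, 1 / ((1 + |p.1| ^ α) * (1 + |p.2| ^ α)))) :
    Integrable (fun p : ℝ × ℝ => 1 / ((1 + |p.1| ^ α) * (1 + |p.2| ^ α)))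
      (volume : Measure (ℝ × ℝ)) ∧
    ∀ j k : ℤ, ‖V j k‖ ≤ Cα * Real.sqrt (∫ p in R, w p * ‖F p‖ ^ 2) := by
  have h0 : (0:ℝ) < α := by linarith
  set g : ℝ × ℝ → ℝ := fun p => (1 + |p.1| ^ α) * (1 + |p.2| ^ α) with hg
  have hg1 : ∀ p : ℝ × ℝ, (1:ℝ) ≤ g p := by
    intro p
    have h1 : (0:ℝ) ≤ |p.1| ^ α := Real.rpow_nonneg (abs_nonneg _) _
    have h2 : (0:ℝ) ≤ |p.2| ^ α := Real.rpow_nonneg (abs_nonneg _) _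
    simp only [hg]; nlinarith
  have hgpos : ∀ p : ℝ × ℝ, (0:ℝ) < g p := fun p => lt_of_lt_of_le one_pos (hg1 p)
  have hgcont : Continuous g := by
    apply Continuous.mul
    · exact continuous_const.add ((continuous_abs.comp continuous_fst).rpow_const
        fun x => Or.inr h0.le)
    · exact continuous_const.add ((continuous_abs.comp continuous_snd).rpow_const
        fun x => Or.inr h0.le)
  -- Part 1: integrability
  have h1d := aux_one_div_integrable α hα₁
  have hprod : Integrable (fun p : ℝ × ℝ => (1 / (1 + |p.1| ^ α)) * (1 / (1 + |p.2| ^ α)))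
      (volume : Measure (ℝ × ℝ)) := by
    rw [MeasureTheory.Measure.volume_eq_prod]; exact h1d.mul_prod h1d
  have hInt2 : Integrable (fun p : ℝ × ℝ => 1 / g p) (volume : Measure (ℝ × ℝ)) := by
    simpa only [one_div_mul_one_div] using hprod
  refine ⟨hInt2, fun j k => ?_⟩
  -- pointwise comparison g ≤ w
  have hgw : ∀ p : ℝ × ℝ, g p ≤ w p := by
    intro p
    have hab : |p.1 * p.2| ^ α = |p.1| ^ α * |p.2| ^ α := by
      rw [abs_mul, Real.mul_rpow (abs_nonneg _) (abs_nonneg _)]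
    have h1 : (0:ℝ) ≤ |p.1| ^ α := Real.rpow_nonneg (abs_nonneg _) _
    have h2 : (0:ℝ) ≤ |p.2| ^ α := Real.rpow_nonneg (abs_nonneg _) _
    have h3 : (0:ℝ) ≤ |p.1| ^ (2*α) := Real.rpow_nonneg (abs_nonneg _) _
    have h4 : (0:ℝ) ≤ |p.2| ^ (2*α) := Real.rpow_nonneg (abs_nonneg _) _
    simp only [hg, hw, hab]; nlinarith
  -- the exponential has norm one
  have hexp : ∀ p : ℝ × ℝ,
      ‖Complex.exp (Complex.I * (p.1 * j * hx + p.2 * k * hy))‖ = 1 := by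
    intro p
    have h : (Complex.I * (↑p.1 * ↑j * ↑hx + ↑p.2 * ↑k * ↑hy))
        = ((p.1 * j * hx + p.2 * k * hy : ℝ) : ℂ) * Complex.I := by push_cast; ring
    rw [h, Complex.norm_exp_ofReal_mul_I]
  -- step 1 : bound the norm of V by the integral of ‖F‖
  have hstep1 : ‖V j k‖ ≤ (1 / (2 * Real.pi)) * ∫ p in R, ‖F p‖ := by
    rw [hV j k, norm_mul]
    have hc : ((1 / (2 * Real.pi) : ℂ)) = (((1 / (2 * Real.pi) : ℝ)) : ℂ) := by push_cast; ring
    rw [hc, Complex.norm_real, Real.norm_eq_abs,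
      abs_of_pos (by positivity : (0:ℝ) < 1 / (2 * Real.pi))]
    refine mul_le_mul_of_nonneg_left ?_ (by positivity)
    calc ‖∫ p in R, F p * Complex.exp (Complex.I * (p.1 * j * hx + p.2 * k * hy))‖
        ≤ ∫ p in R, ‖F p * Complex.exp (Complex.I * (p.1 * j * hx + p.2 * k * hy))‖ :=
          norm_integral_le_integral_norm _
      _ = ∫ p in R, ‖F p‖ := by simp only [norm_mul, hexp, mul_one]
  -- Cauchy–Schwarz setup
  have hmeasF : AEStronglyMeasurable F (volume.restrict R) := hF.1
  have hsqrtg_cont : Continuous fun p : ℝ × ℝ => Real.sqrt (g p) := hgcont.sqrt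
  have hsqrtg_pos : ∀ p : ℝ × ℝ, (0:ℝ) < Real.sqrt (g p) :=
    fun p => Real.sqrt_pos.2 (hgpos p)
  have hfm : AEStronglyMeasurable (fun p : ℝ × ℝ => 1 / Real.sqrt (g p))
      (volume.restrict R) :=
    (continuous_const.div hsqrtg_cont fun p => (hsqrtg_pos p).ne').aestronglyMeasurable
  have hhm : AEStronglyMeasurable (fun p : ℝ × ℝ => Real.sqrt (g p) * ‖F p‖)
      (volume.restrict R) :=
    hsqrtg_cont.aestronglyMeasurable.mul hmeasF.norm
  have hsq1 : (fun p : ℝ × ℝ => (1 / Real.sqrt (g p)) ^ 2) = fun p => 1 / g p := by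
    funext p
    rw [div_pow, one_pow, Real.sq_sqrt (hgpos p).le]
  have hsq2 : (fun p : ℝ × ℝ => (Real.sqrt (g p) * ‖F p‖) ^ 2)
      = fun p => g p * ‖F p‖ ^ 2 := by
    funext p
    rw [mul_pow, Real.sq_sqrt (hgpos p).le]
  have hIntg : IntegrableOn (fun p : ℝ × ℝ => g p * ‖F p‖ ^ 2) R := by
    refine hFw.mono' (hgcont.aestronglyMeasurable.mul (hmeasF.norm.pow 2)) ?_
    refine Filter.Eventually.of_forall fun p => ?_
    rw [Real.norm_eq_abs, abs_of_nonneg (by positivity)]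
    exact mul_le_mul_of_nonneg_right (hgw p) (by positivity)
  have hmemf : MemLp (fun p : ℝ × ℝ => 1 / Real.sqrt (g p)) (ENNReal.ofReal 2)
      (volume.restrict R) := by
    rw [ENNReal.ofReal_ofNat]
    exact (memLp_two_iff_integrable_sq hfm).2 (by rw [hsq1]; exact hInt2.integrableOn)
  have hmemh : MemLp (fun p : ℝ × ℝ => Real.sqrt (g p) * ‖F p‖) (ENNReal.ofReal 2)
      (volume.restrict R) := by
    rw [ENNReal.ofReal_ofNat]
    exact (memLp_two_iff_integrable_sq hhm).2 (by rw [hsq2]; exact hIntg)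
  have hconj : Real.HolderConjugate 2 2 := Real.HolderConjugate.two_two
  have hCS := integral_mul_norm_le_Lp_mul_Lq hconj hmemf hmemh
  -- rewrite the Cauchy–Schwarz statement
  have hpoint : (fun p : ℝ × ℝ => ‖1 / Real.sqrt (g p)‖ * ‖Real.sqrt (g p) * ‖F p‖‖)
      = fun p => ‖F p‖ := by
    funext p
    rw [Real.norm_eq_abs, Real.norm_eq_abs, abs_of_pos (by positivity),
      abs_of_nonneg (by positivity)]
    field_simp [(hsqrtg_pos p).ne']
  have hrpow1 : (fun p : ℝ × ℝ => ‖1 / Real.sqrt (g p)‖ ^ (2:ℝ)) = fun p => 1 / g p := by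
    funext p
    rw [Real.rpow_two, Real.norm_eq_abs, sq_abs]
    exact congrFun hsq1 p
  have hrpow2 : (fun p : ℝ × ℝ => ‖Real.sqrt (g p) * ‖F p‖‖ ^ (2:ℝ))
      = fun p => g p * ‖F p‖ ^ 2 := by
    funext p
    rw [Real.rpow_two, Real.norm_eq_abs, sq_abs]
    exact congrFun hsq2 p
  rw [hpoint, hrpow1, hrpow2] at hCS
  -- bound the two factors
  have hA : (0:ℝ) ≤ ∫ p : ℝ × ℝ, 1 / g p := integral_nonneg fun p => by positivity
  have hW : (0:ℝ) ≤ ∫ p in R, w p * ‖F p‖ ^ 2 := by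
    refine integral_nonneg fun p => ?_
    have : (0:ℝ) ≤ w p := le_trans (by linarith [hg1 p]) (hgw p)
    positivity
  have hfac1 : (∫ p in R, 1 / g p) ^ ((1:ℝ)/2) ≤ (∫ p : ℝ × ℝ, 1 / g p) ^ ((1:ℝ)/2) := by
    refine Real.rpow_le_rpow (integral_nonneg fun p => by positivity) ?_ (by norm_num)
    exact setIntegral_le_integral hInt2 (Filter.Eventually.of_forall fun p => by positivity)
  have hfac2 : (∫ p in R, g p * ‖F p‖ ^ 2) ^ ((1:ℝ)/2)
      ≤ (∫ p in R, w p * ‖F p‖ ^ 2) ^ ((1:ℝ)/2) := by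
    refine Real.rpow_le_rpow (integral_nonneg fun p => by positivity) ?_ (by norm_num)
    refine integral_mono hIntg hFw fun p => ?_
    exact mul_le_mul_of_nonneg_right (hgw p) (by positivity)
  have hFnorm : ∫ p in R, ‖F p‖
      ≤ (∫ p : ℝ × ℝ, 1 / g p) ^ ((1:ℝ)/2) * (∫ p in R, w p * ‖F p‖ ^ 2) ^ ((1:ℝ)/2) := by
    refine le_trans hCS (mul_le_mul hfac1 hfac2 ?_ ?_)
    · exact Real.rpow_nonneg (integral_nonneg fun p => by positivity) _
    · exact Real.rpow_nonneg hA _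
  calc ‖V j k‖ ≤ (1 / (2 * Real.pi)) * ∫ p in R, ‖F p‖ := hstep1
    _ ≤ (1 / (2 * Real.pi)) *
        ((∫ p : ℝ × ℝ, 1 / g p) ^ ((1:ℝ)/2) * (∫ p in R, w p * ‖F p‖ ^ 2) ^ ((1:ℝ)/2)) :=
      mul_le_mul_of_nonneg_left hFnorm (by positivity)
    _ = Cα * Real.sqrt (∫ p in R, w p * ‖F p‖ ^ 2) := by
      rw [hC, Real.sqrt_eq_rpow, Real.sqrt_eq_rpow]
      ring
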